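/- Let H(n) denote the number of permutations σ of [n] = {1,…,n} that are not locally parallel to the identity permutation. Then H(n) ≤ 6^n for every positive integer n. -/

import Mathlib

/-- Two permutations `σ` and `τ` of `[n]` are *locally parallel* if there exist
distinct elements `a, b` with `σ⁻¹(a) < σ⁻¹(b)`, `τ⁻¹(b) < τ⁻¹(a)`, and the position
intervals `[σ⁻¹(a), σ⁻¹(b)]` and `[τ⁻¹(b), τ⁻¹(a)]` disjoint. -/
def LocallyParallel {n : ℕ} (σ τ : Equiv.Perm (Fin n)) : Prop :=
  ∃ a b : Fin n, a ≠ b ∧ σ⁻¹ a < σ⁻¹ b ∧ τ⁻¹ b < τ⁻¹ a ∧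
    Set.Icc (σ⁻¹ a) (σ⁻¹ b) ∩ Set.Icc (τ⁻¹ b) (τ⁻¹ a) = ∅

namespace LPAux

/-- The structural condition: every inversion `(i,j)` has `i ≤ σ i` and `σ j ≤ j`. -/
def Good {n : ℕ} (σ : Equiv.Perm (Fin n)) : Prop :=
  ∀ i j : Fin n, i < j → σ j < σ i → i ≤ σ i ∧ σ j ≤ j

lemma good_of_not_lp {n : ℕ} {σ : Equiv.Perm (Fin n)}
    (h : ¬ LocallyParallel σ 1) : Good σ := by
  intro i j hij hji
  have hab : σ i ≠ σ j := fun he => (ne_of_lt hij) (σ.injective he)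
  have hne : Set.Icc i j ∩ Set.Icc (σ j) (σ i) ≠ ∅ := by
    intro hemp
    exact h ⟨σ i, σ j, hab, by simpa using hij, by simpa using hji, by simpa using hemp⟩
  obtain ⟨k, hk1, hk2⟩ := Set.nonempty_iff_ne_empty.2 hne
  exact ⟨le_trans hk1.1 hk2.2, le_trans hk2.1 hk1.2⟩

lemma good_mono_def {n : ℕ} {σ : Equiv.Perm (Fin n)} (hσ : Good σ)
    {i j : Fin n} (hi : σ i < i) (hij : i < j) : σ i < σ j := by
  rcases lt_trichotomy (σ i) (σ j) with h | h | h
  · exact h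
  · exact absurd (σ.injective h) (ne_of_lt hij)
  · exact absurd (hσ i j hij h).1 (not_le.2 hi)

lemma good_mono_exc {n : ℕ} {σ : Equiv.Perm (Fin n)} (hσ : Good σ)
    {i j : Fin n} (hj : j < σ j) (hij : i < j) : σ i < σ j := by
  rcases lt_trichotomy (σ i) (σ j) with h | h | h
  · exact h
  · exact absurd (σ.injective h) (ne_of_lt hij)
  · exact absurd (hσ i j hij h).2 (not_le.2 hj)

open Finset

/-- Key uniqueness lemma on the deficiency set. -/
lemma eq_on_def {n : ℕ} {σ τ : Equiv.Perm (Fin n)} (hσ : Good σ) (hτ : Good τ)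
    (hD : ∀ i, σ i < i ↔ τ i < i)
    (hS : ∀ v : Fin n, v < σ⁻¹ v ↔ v < τ⁻¹ v) :
    ∀ i : Fin n, σ i < i → σ i = τ i := by
  classical
  set D : Finset (Fin n) := univ.filter (fun i => σ i < i) with hDdef
  set S : Finset (Fin n) := univ.filter (fun v => v < σ⁻¹ v) with hSdef
  have himg : D.image σ = S := by
    ext v
    simp only [hDdef, hSdef, mem_image, mem_filter, mem_univ, true_and]
    constructor
    · rintro ⟨i, hi, rfl⟩
      simpa using hi
    · intro hv
      exact ⟨σ⁻¹ v, by simpa using hv, by simp⟩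
  have himgτ : D.image τ = S := by
    ext v
    simp only [hDdef, hSdef, mem_image, mem_filter, mem_univ, true_and]
    constructor
    · rintro ⟨i, hi, rfl⟩
      rw [hS]
      simpa using (hD i).1 hi
    · intro hv
      have hv' : v < τ⁻¹ v := (hS v).1 hv
      refine ⟨τ⁻¹ v, ?_, by simp⟩
      rw [hD]
      simpa using hv'
  have hcard : S.card = D.card := by
    rw [← himg]; exact card_image_of_injective _ σ.injective
  set e : Fin D.card ↪o Fin n := D.orderEmbOfFin rfl with hedef
  have hemem : ∀ m, e m ∈ D := fun m => Finset.orderEmbOfFin_mem D rfl m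
  have hf : ∀ (ρ : Equiv.Perm (Fin n)), Good ρ → D.image ρ = S →
      (∀ i ∈ D, ρ i < i) → (fun m => ρ (e m)) = ⇑(S.orderEmbOfFin hcard) := by
    intro ρ hρ himρ hρD
    apply Finset.orderEmbOfFin_unique hcard
    · intro m
      rw [← himρ]
      exact mem_image_of_mem _ (hemem m)
    · intro m m' hmm'
      exact good_mono_def hρ (hρD _ (hemem m)) (e.strictMono hmm')
  have hρDσ : ∀ i ∈ D, σ i < i := by
    intro i hi; rw [hDdef, mem_filter] at hi; exact hi.2
  have hρDτ : ∀ i ∈ D, τ i < i := by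
    intro i hi; exact (hD i).1 (hρDσ i hi)
  have heq := (hf σ hσ himg hρDσ).trans (hf τ hτ himgτ hρDτ).symm
  intro i hi
  have hiD : i ∈ D := by rw [hDdef, mem_filter]; exact ⟨mem_univ _, hi⟩
  have : (i : Fin n) ∈ Set.range e := by
    rw [hedef]
    rw [show Set.range ⇑(D.orderEmbOfFin rfl) = ↑D from Finset.range_orderEmbOfFin D rfl]
    exact hiD
  obtain ⟨m, rfl⟩ := this
  exact congrFun heq m

/-- Key uniqueness lemma on the excedance set. -/
lemma eq_on_exc {n : ℕ} {σ τ : Equiv.Perm (Fin n)} (hσ : Good σ) (hτ : Good τ)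
    (hE : ∀ i, i < σ i ↔ i < τ i)
    (hT : ∀ v : Fin n, σ⁻¹ v < v ↔ τ⁻¹ v < v) :
    ∀ i : Fin n, i < σ i → σ i = τ i := by
  classical
  set E : Finset (Fin n) := univ.filter (fun i => i < σ i) with hEdef
  set T : Finset (Fin n) := univ.filter (fun v => σ⁻¹ v < v) with hTdef
  have himg : E.image σ = T := by
    ext v
    simp only [hEdef, hTdef, mem_image, mem_filter, mem_univ, true_and]
    constructor
    · rintro ⟨i, hi, rfl⟩
      simpa using hi
    · intro hv
      exact ⟨σ⁻¹ v, by simpa using hv, by simp⟩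
  have himgτ : E.image τ = T := by
    ext v
    simp only [hEdef, hTdef, mem_image, mem_filter, mem_univ, true_and]
    constructor
    · rintro ⟨i, hi, rfl⟩
      rw [hT]
      simpa using (hE i).1 hi
    · intro hv
      have hv' : τ⁻¹ v < v := (hT v).1 hv
      refine ⟨τ⁻¹ v, ?_, by simp⟩
      rw [hE]
      simpa using hv'
  have hcard : T.card = E.card := by
    rw [← himg]; exact card_image_of_injective _ σ.injective
  set e : Fin E.card ↪o Fin n := E.orderEmbOfFin rfl with hedef
  have hemem : ∀ m, e m ∈ E := fun m => Finset.orderEmbOfFin_mem E rfl m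
  have hf : ∀ (ρ : Equiv.Perm (Fin n)), Good ρ → E.image ρ = T →
      (∀ i ∈ E, i < ρ i) → (fun m => ρ (e m)) = ⇑(T.orderEmbOfFin hcard) := by
    intro ρ hρ himρ hρE
    apply Finset.orderEmbOfFin_unique hcard
    · intro m
      rw [← himρ]
      exact mem_image_of_mem _ (hemem m)
    · intro m m' hmm'
      exact good_mono_exc hρ (hρE _ (hemem m')) (e.strictMono hmm')
  have hρEσ : ∀ i ∈ E, i < σ i := by
    intro i hi; rw [hEdef, mem_filter] at hi; exact hi.2
  have hρEτ : ∀ i ∈ E, i < τ i := by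
    intro i hi; exact (hE i).1 (hρEσ i hi)
  have heq := (hf σ hσ himg hρEσ).trans (hf τ hτ himgτ hρEτ).symm
  intro i hi
  have hiE : i ∈ E := by rw [hEdef, mem_filter]; exact ⟨mem_univ _, hi⟩
  have : (i : Fin n) ∈ Set.range e := by
    rw [hedef]
    rw [show Set.range ⇑(E.orderEmbOfFin rfl) = ↑E from Finset.range_orderEmbOfFin E rfl]
    exact hiE
  obtain ⟨m, rfl⟩ := this
  exact congrFun heq m

def trit {n : ℕ} (a b : Fin n) : Fin 3 :=
  if a < b then 0 else if a = b then 1 else 2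

lemma trit_iff {n : ℕ} {a b c d : Fin n} (h : trit a b = trit c d) :
    (a < b ↔ c < d) ∧ (a = b ↔ c = d) ∧ (b < a ↔ d < c) := by
  unfold trit at h
  split_ifs at h with h1 h2 h3 h4 h5 h6 h7 h8 h9 <;>
    first
      | (exact absurd h (by decide))
      | (refine ⟨?_, ?_, ?_⟩ <;> constructor <;> intro hx <;>
          first
            | assumption
            | omega)

end LPAux

/-- The number of permutations of `[n]` not locally parallel to the identity
permutation is at most `6 ^ n`. -/
theorem card_not_locallyParallel_id_le (n : ℕ) (hn : 0 < n) :
    Nat.card {σ : Equiv.Perm (Fin n) // ¬ LocallyParallel σ 1} ≤ 6 ^ n := by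
  classical
  set F : {σ : Equiv.Perm (Fin n) // ¬ LocallyParallel σ 1} → (Fin n → Fin 3 × Bool) :=
    fun σ i => (LPAux.trit (σ.1 i) i, decide ((i : Fin n) < σ.1⁻¹ i)) with hF
  have hinj : Function.Injective F := by
    rintro ⟨σ, hσ0⟩ ⟨τ, hτ0⟩ h
    have hσ := LPAux.good_of_not_lp hσ0
    have hτ := LPAux.good_of_not_lp hτ0
    have hcmp : ∀ i, LPAux.trit (σ i) i = LPAux.trit (τ i) i := fun i =>
      congrArg Prod.fst (congrFun h i)
    have hbit : ∀ i : Fin n, (i < σ⁻¹ i ↔ i < τ⁻¹ i) := by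
      intro i
      have := congrArg Prod.snd (congrFun h i)
      simpa [hF] using this
    have hlt : ∀ i, σ i < i ↔ τ i < i := fun i => (LPAux.trit_iff (hcmp i)).1
    have hgt : ∀ i, i < σ i ↔ i < τ i := fun i => (LPAux.trit_iff (hcmp i)).2.2
    have heq : ∀ i, σ i = i ↔ τ i = i := by
      intro i
      rcases lt_trichotomy (σ i) i with h1 | h1 | h1
      · constructor
        · intro h2; exact absurd h2 (ne_of_lt h1)
        · intro h2
          exact absurd ((hlt i).1 h1) (by simp [h2])
      · simp only [h1, true_iff]
        rcases lt_trichotomy (τ i) i with h2 | h2 | h2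
        · exact absurd ((hlt i).2 h2) (by simp [h1])
        · exact h2
        · exact absurd ((hgt i).2 h2) (by simp [h1])
      · constructor
        · intro h2; exact absurd h2 (ne_of_gt h1)
        · intro h2
          exact absurd ((hgt i).1 h1) (by simp [h2])
    -- fixed points in value terms
    have hfixinv : ∀ v : Fin n, σ⁻¹ v = v ↔ τ⁻¹ v = v := by
      intro v
      constructor
      · intro hv
        have h1 : σ v = v := by
          conv_lhs => rw [← hv]
          simp
        have h2 : τ v = v := (heq v).1 h1
        conv_lhs => rw [← h2]
        simp
      · intro hv
        have h1 : τ v = v := by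
          conv_lhs => rw [← hv]
          simp
        have h2 : σ v = v := (heq v).2 h1
        conv_lhs => rw [← h2]
        simp
    have hbit' : ∀ v : Fin n, (σ⁻¹ v < v ↔ τ⁻¹ v < v) := by
      intro v
      constructor
      · intro hv
        rcases lt_trichotomy (τ⁻¹ v) v with h2 | h2 | h2
        · exact h2
        · exact absurd ((hfixinv v).2 h2) (ne_of_lt hv)
        · exact absurd ((hbit v).2 h2) (not_lt.2 (le_of_lt hv))
      · intro hv
        rcases lt_trichotomy (σ⁻¹ v) v with h2 | h2 | h2
        · exact h2
        · exact absurd ((hfixinv v).1 h2) (ne_of_lt hv)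
        · exact absurd ((hbit v).1 h2) (not_lt.2 (le_of_lt hv))
    have : σ = τ := by
      ext i
      rcases lt_trichotomy (σ i) i with h1 | h1 | h1
      · exact congrArg Fin.val (LPAux.eq_on_def hσ hτ hlt hbit i h1)
      · rw [h1, ((heq i).1 h1)]
      · exact congrArg Fin.val (LPAux.eq_on_exc hσ hτ hgt hbit' i h1)
    simp [this]
  have hle := Nat.card_le_card_of_injective F hinj
  calc Nat.card {σ : Equiv.Perm (Fin n) // ¬ LocallyParallel σ 1}
      ≤ Nat.card (Fin n → Fin 3 × Bool) := hle
    _ = 6 ^ n := by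
        simp [Nat.card_eq_fintype_card, Fintype.card_fun]
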